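/- Hopf trace theorem: let C_* be a finite chain complex of finite-dimensional vector spaces over a field, and φ_* : C_* → C_* a chain map (commuting with the boundary operators). Then Σ_q (−1)^q tr(φ_q : C_q → C_q) = Σ_q (−1)^q tr(φ_{*q} : H_q(C) → H_q(C)), where H_q(C) denotes homology. -/

import Mathlib

open LinearMap CategoryTheory

section TraceLemmas

variable {k : Type} [Field k]

lemma hopfTraceProd {V W : Type*} [AddCommGroup V] [Module k V]
    [AddCommGroup W] [Module k W] [FiniteDimensional k V] [FiniteDimensional k W]
    (g : (V × W) →ₗ[k] (V × W)) :
    trace k (V × W) g = trace k V ((fst k V W) ∘ₗ g ∘ₗ (inl k V W))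
      + trace k W ((snd k V W) ∘ₗ g ∘ₗ (inr k V W)) := by
  have h : g = (inl k V W ∘ₗ (fst k V W ∘ₗ g)) + (inr k V W ∘ₗ (snd k V W ∘ₗ g)) := by
    ext x <;> simp
  nth_rewrite 1 [h]
  rw [map_add, trace_comp_comm' (fst k V W ∘ₗ g) (inl k V W),
    trace_comp_comm' (snd k V W ∘ₗ g) (inr k V W), comp_assoc, comp_assoc]

/-- Trace of an endomorphism preserving a submodule splits as trace on the
submodule plus trace on the quotient. -/
lemma hopfTraceRestrictAdd {V : Type*} [AddCommGroup V] [Module k V]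
    [FiniteDimensional k V] (p : Submodule k V) (f : V →ₗ[k] V) (hf : ∀ x ∈ p, f x ∈ p) :
    trace k V f = trace k p (f.restrict hf)
      + trace k (V ⧸ p) (p.mapQ p f (fun x hx => hf x hx)) := by
  obtain ⟨q, hq⟩ := p.exists_isCompl
  let e := Submodule.prodEquivOfIsCompl p q hq
  rw [← trace_conj' f e.symm]
  rw [hopfTraceProd]
  congr 1
  · congr 1
    ext x
    have h1 : e (inl k p q x) = (x : V) := by
      simp [e, Submodule.coe_prodEquivOfIsCompl']
    simp only [LinearEquiv.conj_apply, LinearMap.coe_comp, Function.comp_apply, LinearEquiv.coe_coe,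
      LinearEquiv.symm_symm]
    rw [h1]
    have h2 : e.symm (f x) = ((⟨f (x:V), hf (x:V) x.2⟩ : p), 0) :=
      Submodule.prodEquivOfIsCompl_symm_apply_left (p := p) (q := q) hq
        (⟨f (x:V), hf (x:V) x.2⟩ : p)
    rw [h2]
    rfl
  · rw [← trace_conj' _ (Submodule.quotientEquivOfIsCompl p q hq)]
    congr 1
    ext (x : q)
    simp only [LinearEquiv.conj_apply, LinearMap.coe_comp, Function.comp_apply, LinearEquiv.coe_coe,
      LinearEquiv.symm_symm]
    have h1 : e (inr k p q x) = (x : V) := by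
      simp [e, Submodule.coe_prodEquivOfIsCompl']
    rw [h1]
    have key : ∀ v : V, (Submodule.quotientEquivOfIsCompl p q hq) (Submodule.Quotient.mk v)
        = (e.symm v).2 := by
      intro v
      have hv : Submodule.Quotient.mk v = (Submodule.Quotient.mk (((e.symm v).2 : V)) : V ⧸ p) := by
        rw [Submodule.Quotient.eq]
        have : ((e.symm v).1 : V) + ((e.symm v).2 : V) = v := by
          have := e.apply_symm_apply v
          rwa [Submodule.coe_prodEquivOfIsCompl'] at this
        have h3 : v - ((e.symm v).2 : V) = ((e.symm v).1 : V) := by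
          rw [sub_eq_iff_eq_add]; exact this.symm
        rw [h3]
        exact ((e.symm v).1).2
      rw [hv, Submodule.quotientEquivOfIsCompl_apply_mk_coe]
    have h2 : (Submodule.quotientEquivOfIsCompl p q hq).symm x
        = Submodule.Quotient.mk (x : V) := Submodule.quotientEquivOfIsCompl_symm_apply p q hq x
    rw [h2, Submodule.mapQ_apply, key]
    rfl

/-- Traces agree for endomorphisms intertwined by a linear equivalence. -/
lemma hopfTraceCongr {A B : Type*} [AddCommGroup A] [Module k A] [AddCommGroup B] [Module k B]
    [FiniteDimensional k A] [FiniteDimensional k B] (e : A ≃ₗ[k] B)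
    (f : A →ₗ[k] A) (g : B →ₗ[k] B) (h : ∀ a, g (e a) = e (f a)) :
    trace k A f = trace k B g := by
  have hg : g = e.conj f := by
    ext b
    rw [LinearEquiv.conj_apply]
    simp only [LinearMap.coe_comp, Function.comp_apply, LinearEquiv.coe_coe]
    rw [← h (e.symm b), e.apply_symm_apply]
  rw [hg, trace_conj']

lemma hopfTraceZero {A : Type*} [AddCommGroup A] [Module k A] [Subsingleton A]
    (f : A →ₗ[k] A) : trace k A f = 0 := by
  have : f = 0 := Subsingleton.elim _ _
  rw [this, map_zero]

/-- Traces of restrictions to equal submodules agree. -/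
lemma hopfTraceOfEq {V : Type*} [AddCommGroup V] [Module k V]
    (p p' : Submodule k V) (hpp : p = p') (f : V →ₗ[k] V)
    (hp : ∀ x ∈ p, f x ∈ p) (hp' : ∀ x ∈ p', f x ∈ p') :
    trace k p (f.restrict hp) = trace k p' (f.restrict hp') := by
  subst hpp
  rfl

/-- First isomorphism theorem for traces: the induced map on `V ⧸ ker d` has the same
trace as the restriction to `range d`. -/
lemma hopfTraceQuotKer {V W : Type*} [AddCommGroup V] [Module k V] [AddCommGroup W] [Module k W]
    [FiniteDimensional k V] [FiniteDimensional k W]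
    (d : V →ₗ[k] W) (f : V →ₗ[k] V) (g : W →ₗ[k] W) (hc : ∀ v, g (d v) = d (f v))
    (hker : ker d ≤ (ker d).comap f) (hrng : ∀ x ∈ range d, g x ∈ range d) :
    trace k (V ⧸ ker d) ((ker d).mapQ (ker d) f hker)
      = trace k (range d) (g.restrict hrng) := by
  apply hopfTraceCongr d.quotKerEquivRange
  intro a
  obtain ⟨v, rfl⟩ := Submodule.Quotient.mk_surjective _ a
  apply Subtype.ext
  show (g (d.quotKerEquivRange (Submodule.Quotient.mk v)) : W) = _
  rw [Submodule.mapQ_apply, d.quotKerEquivRange_apply_mk, d.quotKerEquivRange_apply_mk]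
  exact hc v

/-- Trace of a doubly-restricted endomorphism equals trace of the restriction to the
image submodule in the ambient space. -/
lemma hopfTraceNested {V : Type*} [AddCommGroup V] [Module k V] [FiniteDimensional k V]
    (p : Submodule k V) (q : Submodule k p) (g : V →ₗ[k] V)
    (hp : ∀ x ∈ p, g x ∈ p) (hq : ∀ x ∈ q, (g.restrict hp) x ∈ q)
    (hq' : ∀ x ∈ q.map p.subtype, g x ∈ q.map p.subtype) :
    trace k q ((g.restrict hp).restrict hq)
      = trace k (q.map p.subtype) (g.restrict hq') := by
  apply hopfTraceCongr (p.equivSubtypeMap q)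
  intro a
  apply Subtype.ext
  rw [Submodule.equivSubtypeMap_apply]
  show (((g.restrict hp) (a : p)) : V) = g ((p.equivSubtypeMap q a : V))
  rw [Submodule.equivSubtypeMap_apply]
  rfl

end TraceLemmas

section ShortComplexLemmas

universe v
variable {k : Type} [Field k] (S : ShortComplex (ModuleCat.{v} k)) (ψ : S ⟶ S)

lemma hopfKerS : ∀ x ∈ ker S.g.hom, ψ.τ₂.hom x ∈ ker S.g.hom := by
  intro x hx
  have := congrFun (congrArg (fun (m : S.X₂ ⟶ S.X₃) => (m.hom : S.X₂ → S.X₃)) ψ.comm₂₃) x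
  simp only [ModuleCat.hom_comp, LinearMap.coe_comp, Function.comp_apply] at this
  simp only [mem_ker] at hx ⊢
  rw [this, hx, map_zero]

noncomputable def hopfRestrS : ker S.g.hom →ₗ[k] ker S.g.hom :=
  ψ.τ₂.hom.restrict (hopfKerS S ψ)

lemma hopfRangeS :
    ∀ x ∈ range S.moduleCatToCycles, hopfRestrS S ψ x ∈ range S.moduleCatToCycles := by
  rintro x ⟨y, rfl⟩
  refine ⟨ψ.τ₁ y, ?_⟩
  have := congrFun (congrArg (fun (m : S.X₁ ⟶ S.X₂) => (m.hom : S.X₁ → S.X₂)) ψ.comm₁₂) y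
  simp only [ModuleCat.hom_comp, LinearMap.coe_comp, Function.comp_apply] at this
  apply Subtype.ext
  simp [hopfRestrS, restrict_apply, ShortComplex.moduleCatToCycles, this]
  exact this

noncomputable def hopfConcreteH : S.moduleCatLeftHomologyData.H →ₗ[k] S.moduleCatLeftHomologyData.H :=
  Submodule.mapQ _ _ (hopfRestrS S ψ) (fun x hx => hopfRangeS S ψ x hx)

lemma hopfCyclesMorphismEq :
    S.moduleCatCyclesIso.inv ≫ ShortComplex.cyclesMap ψ ≫ S.moduleCatCyclesIso.hom
      = ModuleCat.ofHom (hopfRestrS S ψ) := by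
  apply ModuleCat.hom_ext
  apply LinearMap.ext
  intro x
  apply Subtype.ext
  show ((ker S.g.hom).subtype)
    (S.moduleCatCyclesIso.hom (ShortComplex.cyclesMap ψ (S.moduleCatCyclesIso.inv x))) = _
  have hc := elementwise_of% (ShortComplex.cyclesMap_i ψ)
  erw [S.moduleCatCyclesIso_hom_i_apply, hc, S.moduleCatCyclesIso_inv_iCycles_apply]
  rfl

lemma hopfHomologyMorphismEq :
    S.moduleCatHomologyIso.inv ≫ ShortComplex.homologyMap ψ ≫ S.moduleCatHomologyIso.hom
      = ModuleCat.ofHom (hopfConcreteH S ψ) := by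
  rw [← cancel_epi S.moduleCatLeftHomologyData.π]
  have h1 : S.moduleCatLeftHomologyData.π ≫ S.moduleCatHomologyIso.inv
      = S.moduleCatCyclesIso.inv ≫ S.homologyπ := (S.moduleCatCyclesIso_inv_π).symm
  rw [reassoc_of% h1, ShortComplex.homologyπ_naturality_assoc, S.π_moduleCatCyclesIso_hom]
  have h2 := reassoc_of% (hopfCyclesMorphismEq S ψ)
  show S.moduleCatCyclesIso.inv ≫ ShortComplex.cyclesMap ψ ≫ S.moduleCatCyclesIso.hom
      ≫ S.moduleCatLeftHomologyData.π = _
  rw [h2]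
  apply ModuleCat.hom_ext
  apply LinearMap.ext
  intro x
  show Submodule.Quotient.mk (hopfRestrS S ψ x) = hopfConcreteH S ψ (Submodule.Quotient.mk x)
  rfl

noncomputable instance hopfMchFin [FiniteDimensional k S.X₂] :
    FiniteDimensional k S.moduleCatLeftHomologyData.H := by
  show FiniteDimensional k (↥(ker S.g.hom) ⧸ range S.moduleCatToCycles)
  infer_instance

lemma hopfTraceHomologyEq [FiniteDimensional k S.X₂] [FiniteDimensional k S.homology] :
    LinearMap.trace k S.homology (ShortComplex.homologyMap ψ).hom
      = LinearMap.trace k S.moduleCatLeftHomologyData.H (hopfConcreteH S ψ) := by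
  have h := hopfHomologyMorphismEq S ψ
  apply hopfTraceCongr S.moduleCatHomologyIso.toLinearEquiv
  intro a
  have := congrArg (fun m => m.hom (S.moduleCatHomologyIso.hom a)) h
  simpa using this.symm

lemma hopfRangeGS : ∀ x ∈ range S.g.hom,
    ψ.τ₃.hom x ∈ range S.g.hom := by
  rintro x ⟨y, rfl⟩
  refine ⟨ψ.τ₂ y, ?_⟩
  have := congrFun (congrArg (fun (m : S.X₂ ⟶ S.X₃) => (m.hom : S.X₂ → S.X₃)) ψ.comm₂₃) y
  simp only [ModuleCat.hom_comp, LinearMap.coe_comp, Function.comp_apply] at this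
  exact this

lemma hopfRangeFS : ∀ x ∈ range S.f.hom,
    ψ.τ₂.hom x ∈ range S.f.hom := by
  rintro x ⟨y, rfl⟩
  refine ⟨ψ.τ₁ y, ?_⟩
  have := congrFun (congrArg (fun (m : S.X₁ ⟶ S.X₂) => (m.hom : S.X₁ → S.X₂)) ψ.comm₁₂) y
  simp only [ModuleCat.hom_comp, LinearMap.coe_comp, Function.comp_apply] at this
  exact this

lemma hopfMapSubtypeEq :
    (range S.moduleCatToCycles).map (ker S.g.hom).subtype
      = range S.f.hom := by
  have : S.f.hom
      = (ker S.g.hom).subtype ∘ₗ S.moduleCatToCycles := by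
    ext x; rfl
  rw [this, range_comp]

/-- The master trace decomposition for a short complex endomorphism. -/
lemma hopfMaster [FiniteDimensional k S.X₂] [FiniteDimensional k S.X₃]
    [FiniteDimensional k S.homology] :
    trace k S.X₂ ψ.τ₂.hom
      = trace k S.homology (ShortComplex.homologyMap ψ).hom
        + trace k (range S.f.hom) (ψ.τ₂.hom.restrict
            (hopfRangeFS S ψ))
        + trace k (range S.g.hom) (ψ.τ₃.hom.restrict
            (hopfRangeGS S ψ)) := by
  have hc : ∀ v, ψ.τ₃.hom (S.g.hom v)
      = S.g (ψ.τ₂.hom v) := by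
    intro v
    have := congrFun (congrArg (fun (m : S.X₂ ⟶ S.X₃) => (m.hom : S.X₂ → S.X₃)) ψ.comm₂₃) v
    simpa only [ModuleCat.hom_comp, LinearMap.coe_comp, Function.comp_apply] using this.symm
  have hq' : ∀ x ∈ (range S.moduleCatToCycles).map (ker S.g.hom).subtype,
      ψ.τ₂.hom x
        ∈ (range S.moduleCatToCycles).map (ker S.g.hom).subtype := by
    intro x hx
    rw [hopfMapSubtypeEq] at hx ⊢
    exact hopfRangeFS S ψ x hx
  have h1 := hopfTraceRestrictAdd (V := S.X₂.carrier) (ker S.g.hom) ψ.τ₂.hom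
    (hopfKerS S ψ)
  have h2 := hopfTraceQuotKer S.g.hom ψ.τ₂.hom
    ψ.τ₃.hom hc (fun x hx => hopfKerS S ψ x hx) (hopfRangeGS S ψ)
  have h3 := hopfTraceRestrictAdd (range S.moduleCatToCycles)
    (ψ.τ₂.hom.restrict (hopfKerS S ψ)) (hopfRangeS S ψ)
  have h5 := hopfTraceNested (ker S.g.hom) (range S.moduleCatToCycles)
    ψ.τ₂.hom (hopfKerS S ψ) (hopfRangeS S ψ) hq'
  have h6 := hopfTraceOfEq
    ((range S.moduleCatToCycles).map (ker S.g.hom).subtype)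
    (range S.f.hom) (hopfMapSubtypeEq S)
    ψ.τ₂.hom hq' (hopfRangeFS S ψ)
  have h4 : trace k (↥(ker S.g.hom) ⧸ range S.moduleCatToCycles)
      ((range S.moduleCatToCycles).mapQ (range S.moduleCatToCycles)
        (ψ.τ₂.hom.restrict (hopfKerS S ψ)) (fun x hx => hopfRangeS S ψ x hx))
      = trace k S.homology (ShortComplex.homologyMap ψ).hom := by
    exact (hopfTraceHomologyEq S ψ).symm
  rw [h1, h2, h3, h5.trans h6, h4]
  ring

end ShortComplexLemmas

section ChainLemmas

universe v'

variable {k : Type} [Field k] (C : ChainComplex (ModuleCat.{v'} k) ℕ) (φ : C ⟶ C)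

lemma hopfBInv (i j : ℕ) : ∀ x ∈ range (C.d i j).hom, (φ.f j) x ∈ range (C.d i j).hom := by
  rintro x ⟨y, rfl⟩
  refine ⟨φ.f i y, ?_⟩
  have := congrFun (congrArg (fun (m : C.X i ⟶ C.X j) => (m.hom : C.X i → C.X j)) (φ.comm i j)) y
  simpa only [ModuleCat.hom_comp, LinearMap.coe_comp, Function.comp_apply] using this

lemma hopfFEq (q i : ℕ) (h : (ComplexShape.down ℕ).prev q = i)
    (hi : ∀ x ∈ range (C.d i q).hom, (φ.f q) x ∈ range (C.d i q).hom) :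
    trace k (range ((C.sc q).f.hom))
        ((((HomologicalComplex.shortComplexFunctor _ _ q).map φ).τ₂).hom.restrict
          (hopfRangeFS (C.sc q) ((HomologicalComplex.shortComplexFunctor _ _ q).map φ)))
      = trace k (range (C.d i q).hom) ((φ.f q).hom.restrict hi) := by
  subst h; rfl

lemma hopfGEq (q j : ℕ) (h : (ComplexShape.down ℕ).next q = j)
    (hj : ∀ x ∈ range (C.d q j).hom, (φ.f j) x ∈ range (C.d q j).hom) :
    trace k (range ((C.sc q).g.hom))
        ((((HomologicalComplex.shortComplexFunctor _ _ q).map φ).τ₃).hom.restrict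
          (hopfRangeGS (C.sc q) ((HomologicalComplex.shortComplexFunctor _ _ q).map φ)))
      = trace k (range (C.d q j).hom) ((φ.f j).hom.restrict hj) := by
  subst h; rfl

lemma hopfTraceRangeZero {V W : Type*} [AddCommGroup V] [Module k V] [AddCommGroup W]
    [Module k W] (d : V →ₗ[k] W) (hd : d = 0) (f : W →ₗ[k] W)
    (hf : ∀ x ∈ range d, f x ∈ range d) :
    trace k (range d) (f.restrict hf) = 0 := by
  have hbot : range d = ⊥ := by rw [hd]; exact range_zero
  have hbf : ∀ x ∈ (⊥ : Submodule k W), f x ∈ (⊥ : Submodule k W) := by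
    intro x hx
    rw [Submodule.mem_bot] at hx ⊢
    rw [hx, map_zero]
  rw [hopfTraceOfEq (range d) ⊥ hbot f hf hbf]
  exact hopfTraceZero _

end ChainLemmas

open HomologicalComplex in
/-- Hopf trace theorem: for a bounded chain complex `C` of
finite-dimensional vector spaces over a field `k` and a chain map `φ : C ⟶ C`,
the alternating sum of the traces of `φ` on the chain groups equals the
alternating sum of the traces of the induced maps on homology. -/
theorem stmt9 (k : Type) [Field k] (C : ChainComplex (ModuleCat k) ℕ)
    (N : ℕ) (hfin : ∀ q, FiniteDimensional k (C.X q))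
    (hbd : ∀ q, N ≤ q → Subsingleton (C.X q))
    (φ : C ⟶ C) :
    ∑ q ∈ Finset.range N, (-1 : k) ^ q * LinearMap.trace k (C.X q) (φ.f q).hom
      = ∑ q ∈ Finset.range N,
          (-1 : k) ^ q * LinearMap.trace k (C.homology q) (homologyMap φ q).hom := by
  classical
  -- abbreviations
  set B : ℕ → k := fun j => LinearMap.trace k (LinearMap.range (C.d (j+1) j).hom)
    ((φ.f j).hom.restrict (hopfBInv C φ (j+1) j)) with hBdef
  set R : ℕ → k := fun q => Nat.casesOn q 0 (fun j => B j) with hRdef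
  have key : ∀ q, LinearMap.trace k (C.X q) (φ.f q).hom
      = LinearMap.trace k (C.homology q) (homologyMap φ q).hom + (B q + R q) := by
    intro q
    haveI hfd2 : FiniteDimensional k ((C.sc q).X₂) := hfin q
    haveI hfd3 : FiniteDimensional k ((C.sc q).X₃) := hfin ((ComplexShape.down ℕ).next q)
    haveI : FiniteDimensional k ((C.sc q).homology) :=
      LinearEquiv.finiteDimensional ((C.sc q).moduleCatHomologyIso.toLinearEquiv.symm)
    have m := hopfMaster (C.sc q) ((HomologicalComplex.shortComplexFunctor _ _ q).map φ)
    rw [hopfFEq C φ q (q+1) (ChainComplex.prev ℕ q) (hopfBInv C φ (q+1) q)] at m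
    have eG : LinearMap.trace k (LinearMap.range ((C.sc q).g.hom))
        ((((HomologicalComplex.shortComplexFunctor _ _ q).map φ).τ₃).hom.restrict
          (hopfRangeGS (C.sc q) ((HomologicalComplex.shortComplexFunctor _ _ q).map φ)))
        = R q := by
      match q with
      | 0 =>
        rw [hopfGEq C φ 0 0 ChainComplex.next_nat_zero (hopfBInv C φ 0 0)]
        have hd0 : (C.d 0 0).hom = 0 := by
          exact congrArg ModuleCat.Hom.hom (C.shape 0 0 (by simp [ComplexShape.down]))
        exact hopfTraceRangeZero (C.d 0 0).hom hd0 (φ.f 0).hom (hopfBInv C φ 0 0)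
      | (j+1) =>
        rw [hopfGEq C φ (j+1) j (ChainComplex.next_nat_succ j) (hopfBInv C φ (j+1) j)]
    rw [eG] at m
    exact m.trans (add_assoc _ _ _)
  -- now sum up
  rcases N with _ | M
  · simp
  · have hsummand : ∀ q ∈ Finset.range (M+1),
        (-1 : k) ^ q * LinearMap.trace k (C.X q) (φ.f q).hom
          = (-1 : k) ^ q * LinearMap.trace k (C.homology q) (homologyMap φ q).hom
            + ((-1 : k) ^ q * B q + (-1 : k) ^ q * R q) := by
      intro q _
      rw [key q]
      ring
    rw [Finset.sum_congr rfl hsummand, Finset.sum_add_distrib, Finset.sum_add_distrib]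
    have hBM : B M = 0 := by
      haveI : Subsingleton (C.X (M+1)) := hbd (M+1) le_rfl
      have hd : (C.d (M+1) M).hom = 0 := by
        apply LinearMap.ext
        intro x
        rw [Subsingleton.elim x 0, map_zero]
        rfl
      exact hopfTraceRangeZero (C.d (M+1) M).hom hd (φ.f M).hom (hopfBInv C φ (M+1) M)
    have hz : (∑ q ∈ Finset.range (M+1), (-1 : k) ^ q * B q)
        + ∑ q ∈ Finset.range (M+1), (-1 : k) ^ q * R q = 0 := by
      rw [Finset.sum_range_succ (fun q => (-1 : k) ^ q * B q) M,
        Finset.sum_range_succ' (fun q => (-1 : k) ^ q * R q) M, hBM]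
      have hRs : ∀ i, (-1 : k) ^ (i+1) * R (i+1) = (-1 : k) ^ (i+1) * B i := fun i => rfl
      rw [Finset.sum_congr rfl (fun i _ => hRs i)]
      have hR0 : ((-1 : k) ^ 0 * R 0) = 0 := by simp [hRdef]
      rw [hR0]
      have : (∑ q ∈ Finset.range M, (-1 : k) ^ q * B q)
          + ∑ i ∈ Finset.range M, (-1 : k) ^ (i+1) * B i = 0 := by
        rw [← Finset.sum_add_distrib]
        apply Finset.sum_eq_zero
        intro i _
        rw [pow_succ]
        ring
      linear_combination this
    rw [hz, add_zero]
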